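/- Let Z be a compact Hausdorff space and let η be a quasi-state on Z. Then η is monotone: for all F, G ∈ C(Z) with F(z) ≤ G(z) for every z ∈ Z, one has η(F) ≤ η(G). -/

import Mathlib

/-- For `F ∈ C(Z)`, the subalgebra `C(F)` of `C(Z)` generated by `F`:
the set of functions of the form `φ ∘ F` with `φ` continuous. -/
def qsAlgebra {Z : Type*} [TopologicalSpace Z] (F : C(Z, ℝ)) : Set C(Z, ℝ) :=
  {G | ∃ φ : C(ℝ, ℝ), G = φ.comp F}

/-- A quasi-state on a compact space `Z` (Aarnes): `η 1 = 1`, `η` is nonnegative on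
nonnegative functions, and `η` is linear on `C(F)` for every `F ∈ C(Z)`. -/
structure IsQuasiState {Z : Type*} [TopologicalSpace Z] (η : C(Z, ℝ) → ℝ) : Prop where
  map_one : η 1 = 1
  nonneg : ∀ F : C(Z, ℝ), (∀ z, 0 ≤ F z) → 0 ≤ η F
  linear : ∀ F : C(Z, ℝ), ∀ G ∈ qsAlgebra F, ∀ H ∈ qsAlgebra F, ∀ a b : ℝ,
      η (a • G + b • H) = a * η G + b * η H

namespace QSAux

/-- The truncation function `x ↦ min (max x s) t - s`, as a continuous map on `ℝ`. -/
noncomputable def trunc (s t : ℝ) : C(ℝ, ℝ) :=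
  ⟨fun x => min (max x s) t - s, by fun_prop⟩

lemma trunc_apply (s t x : ℝ) : trunc s t x = min (max x s) t - s := rfl

lemma trunc_nonneg {s t : ℝ} (h : s ≤ t) (x : ℝ) : 0 ≤ trunc s t x := by
  simp only [trunc_apply, sub_nonneg]
  exact le_min (le_max_right _ _) h

lemma trunc_le (s t x : ℝ) : trunc s t x ≤ t - s := by
  simp only [trunc_apply]
  exact sub_le_sub_right (min_le_right _ _) s

lemma lt_of_trunc_pos {s t x : ℝ} (h : 0 < trunc s t x) : s < x := by
  by_contra hx
  push_neg at hx
  simp only [trunc_apply, sub_pos, max_eq_right hx] at h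
  exact absurd (min_le_left s t) (not_le.mpr h)

lemma trunc_eq_of_le {s t x : ℝ} (h : t ≤ x) : trunc s t x = t - s := by
  simp only [trunc_apply]
  rw [min_eq_right (le_max_of_le_left h)]

/-- Pointwise telescoping of truncation layers. -/
lemma trunc_telescope (m δ : ℝ) (hδ : 0 ≤ δ) (n : ℕ) (x : ℝ) (hx : m ≤ x) :
    ∑ i ∈ Finset.range n, trunc (m + i * δ) (m + (i + 1) * δ) x
      = min x (m + n * δ) - m := by
  induction n with
  | zero => simp [min_eq_right hx]
  | succ n ih =>
    rw [Finset.sum_range_succ, ih]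
    push_cast
    have hst : m + (n : ℝ) * δ ≤ m + ((n : ℝ) + 1) * δ := by nlinarith
    rcases le_total x (m + (n : ℝ) * δ) with h | h
    · have h1 : trunc (m + n * δ) (m + (n + 1) * δ) x = 0 := by
        rw [trunc_apply, max_eq_right h, min_eq_left hst, sub_self]
      rw [h1, min_eq_left h, min_eq_left (le_trans h hst)]
      ring
    · have h1 : trunc (m + n * δ) (m + (n + 1) * δ) x
          = min x (m + (n + 1) * δ) - (m + n * δ) := by
        rw [trunc_apply, max_eq_left h]
      rw [h1, min_eq_right h]
      ring_nf

variable {Z : Type*} [TopologicalSpace Z]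

lemma one_mem (F : C(Z, ℝ)) : (1 : C(Z, ℝ)) ∈ qsAlgebra F :=
  ⟨1, by ext z; rfl⟩

lemma const_mem (F : C(Z, ℝ)) (c : ℝ) : (ContinuousMap.const Z c) ∈ qsAlgebra F :=
  ⟨ContinuousMap.const ℝ c, by ext z; rfl⟩

variable {η : C(Z, ℝ) → ℝ} (hη : IsQuasiState η)

include hη

lemma eta_add {K G H : C(Z, ℝ)} (hG : G ∈ qsAlgebra K) (hH : H ∈ qsAlgebra K) :
    η (G + H) = η G + η H := by
  have := hη.linear K G hG H hH 1 1
  simpa using this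

lemma eta_const (c : ℝ) : η (ContinuousMap.const Z c) = c := by
  have h := hη.linear 1 1 (one_mem 1) 1 (one_mem 1) c 0
  have h2 : (ContinuousMap.const Z c) = c • (1 : C(Z, ℝ)) + (0 : ℝ) • (1 : C(Z, ℝ)) := by
    ext z; simp
  rw [h2, h, hη.map_one]; ring

/-- Monotonicity of `η` inside a single singly-generated algebra. -/
lemma eta_mono_in {K G H : C(Z, ℝ)} (hG : G ∈ qsAlgebra K) (hH : H ∈ qsAlgebra K)
    (hle : ∀ z, G z ≤ H z) : η G ≤ η H := by
  obtain ⟨φ, rfl⟩ := hG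
  obtain ⟨ψ, rfl⟩ := hH
  have hsum : ψ.comp K = φ.comp K + (ψ - φ).comp K := by
    ext z; simp
  rw [hsum, eta_add hη ⟨φ, rfl⟩ ⟨ψ - φ, rfl⟩]
  have h0 : 0 ≤ η ((ψ - φ).comp K) := by
    refine hη.nonneg _ fun z => ?_
    have := hle z
    simp only [ContinuousMap.comp_apply] at this ⊢
    simp only [ContinuousMap.sub_apply]
    linarith
  linarith

lemma eta_sum (K : C(Z, ℝ)) (ψ : ℕ → C(ℝ, ℝ)) (n : ℕ) :
    η (∑ i ∈ Finset.range n, (ψ i).comp K) = ∑ i ∈ Finset.range n, η ((ψ i).comp K) := by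
  induction n with
  | zero =>
    simp only [Finset.range_zero, Finset.sum_empty]
    have h := hη.linear K ((0 : C(ℝ, ℝ)).comp K) ⟨0, rfl⟩ ((0 : C(ℝ, ℝ)).comp K) ⟨0, rfl⟩ 0 0
    have h2 : (0 : ℝ) • ((0 : C(ℝ, ℝ)).comp K) + (0 : ℝ) • ((0 : C(ℝ, ℝ)).comp K)
        = (0 : C(Z, ℝ)) := by ext z; simp
    rw [h2] at h
    rw [h]; ring
  | succ n ih =>
    rw [Finset.sum_range_succ, Finset.sum_range_succ, ← ih]
    have hmem : (∑ i ∈ Finset.range n, (ψ i).comp K) ∈ qsAlgebra K := by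
      refine ⟨∑ i ∈ Finset.range n, ψ i, ?_⟩
      ext z
      simp [ContinuousMap.sum_apply]
    exact eta_add hη hmem ⟨ψ n, rfl⟩

/-- Decomposition of `η F` into truncation layers. -/
lemma eta_decomp (F : C(Z, ℝ)) (m δ : ℝ) (hδ : 0 ≤ δ) (n : ℕ)
    (hm : ∀ z, m ≤ F z) (hM : ∀ z, F z ≤ m + n * δ) :
    η F = m + ∑ i ∈ Finset.range n, η ((trunc (m + i * δ) (m + (i + 1) * δ)).comp F) := by
  set Φ : ℕ → C(ℝ, ℝ) := fun i => trunc (m + i * δ) (m + (i + 1) * δ) with hΦ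
  have hFeq : F = ContinuousMap.const Z m + ∑ i ∈ Finset.range n, (Φ i).comp F := by
    ext z
    simp only [ContinuousMap.add_apply, ContinuousMap.const_apply, ContinuousMap.sum_apply,
      ContinuousMap.comp_apply, hΦ]
    rw [trunc_telescope m δ hδ n (F z) (hm z), min_eq_left (hM z)]
    ring
  have hmemS : (∑ i ∈ Finset.range n, (Φ i).comp F) ∈ qsAlgebra F := by
    refine ⟨∑ i ∈ Finset.range n, Φ i, ?_⟩
    ext z
    simp [ContinuousMap.sum_apply]
  have hconst : ContinuousMap.const Z m = m • (1 : C(Z, ℝ)) := by ext z; simp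
  calc η F = η ((m : ℝ) • (1 : C(Z, ℝ)) + (1 : ℝ) • (∑ i ∈ Finset.range n, (Φ i).comp F)) := by
        rw [← hconst, one_smul, ← hFeq]
    _ = m * η 1 + 1 * η (∑ i ∈ Finset.range n, (Φ i).comp F) :=
        hη.linear F _ (one_mem F) _ hmemS m 1
    _ = m + ∑ i ∈ Finset.range n, η ((Φ i).comp F) := by
        rw [hη.map_one, eta_sum hη F Φ n]; ring

/-- The key cross-comparison: the `[s+δ, s+2δ]`-layer of `F` is `η`-dominated by the
`[s, s+δ]`-layer of `G`, because both are continuous functions of their sum. -/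
lemma eta_cross (F G : C(Z, ℝ)) (hFG : ∀ z, F z ≤ G z) (s δ : ℝ) (hδ : 0 ≤ δ) :
    η ((trunc (s + δ) (s + δ + δ)).comp F) ≤ η ((trunc s (s + δ)).comp G) := by
  set f : C(Z, ℝ) := (trunc (s + δ) (s + δ + δ)).comp F with hf
  set g : C(Z, ℝ) := (trunc s (s + δ)).comp G with hg
  have ha0 : ∀ z, 0 ≤ f z := fun z => trunc_nonneg (by linarith) _
  have haδ : ∀ z, f z ≤ δ := fun z => by
    have := trunc_le (s + δ) (s + δ + δ) (F z); simpa [hf] using this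
  have hb0 : ∀ z, 0 ≤ g z := fun z => trunc_nonneg (by linarith) _
  have hbδ : ∀ z, g z ≤ δ := fun z => by
    have := trunc_le s (s + δ) (G z); simpa [hg] using this
  have hkey : ∀ z, 0 < f z → g z = δ := by
    intro z hz
    have h1 : s + δ < F z := lt_of_trunc_pos hz
    have h2 : s + δ ≤ G z := le_trans (le_of_lt h1) (hFG z)
    have := trunc_eq_of_le (s := s) h2
    simpa [hg] using this
  set φ₁ : C(ℝ, ℝ) := ⟨fun x => max x δ - δ, by fun_prop⟩ with hφ₁
  set φ₂ : C(ℝ, ℝ) := ⟨fun x => min x δ, by fun_prop⟩ with hφ₂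
  have hfmem : f = φ₁.comp (f + g) := by
    ext z
    simp only [ContinuousMap.comp_apply, ContinuousMap.add_apply, hφ₁, ContinuousMap.coe_mk]
    rcases eq_or_lt_of_le (ha0 z) with h | h
    · rw [← h, zero_add, max_eq_right (hbδ z)]; ring
    · rw [hkey z h, max_eq_left (by linarith)]; ring
  have hgmem : g = φ₂.comp (f + g) := by
    ext z
    simp only [ContinuousMap.comp_apply, ContinuousMap.add_apply, hφ₂, ContinuousMap.coe_mk]
    rcases eq_or_lt_of_le (ha0 z) with h | h
    · rw [← h, zero_add, min_eq_left (hbδ z)]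
    · rw [hkey z h, min_eq_right (by linarith)]
  have hle : ∀ z, f z ≤ g z := by
    intro z
    rcases eq_or_lt_of_le (ha0 z) with h | h
    · rw [← h]; exact hb0 z
    · rw [hkey z h]; exact haδ z
  exact eta_mono_in hη ⟨φ₁, hfmem⟩ ⟨φ₂, hgmem⟩ hle

end QSAux

/-- A quasi-state is monotone. -/
theorem quasiState_monotone {Z : Type*} [TopologicalSpace Z] [CompactSpace Z] [T2Space Z]
    (η : C(Z, ℝ) → ℝ) (hη : IsQuasiState η)
    (F G : C(Z, ℝ)) (hFG : ∀ z, F z ≤ G z) : η F ≤ η G := by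
  open QSAux in
  refine le_of_forall_pos_le_add fun ε hε => ?_
  set M : ℝ := ‖F‖ + ‖G‖ with hM
  have hMnn : 0 ≤ M := add_nonneg (norm_nonneg _) (norm_nonneg _)
  have hFb : ∀ z, -M ≤ F z ∧ F z ≤ M := by
    intro z
    have := ContinuousMap.norm_coe_le_norm F z
    rw [Real.norm_eq_abs] at this
    have h3 : ‖F‖ ≤ M := by rw [hM]; linarith [norm_nonneg G]
    exact abs_le.mp (le_trans this h3)
  have hGb : ∀ z, -M ≤ G z ∧ G z ≤ M := by
    intro z
    have := ContinuousMap.norm_coe_le_norm G z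
    rw [Real.norm_eq_abs] at this
    have h3 : ‖G‖ ≤ M := by rw [hM]; linarith [norm_nonneg F]
    exact abs_le.mp (le_trans this h3)
  set m : ℝ := -M with hm
  set k : ℕ := ⌈(M - m) / ε⌉₊ with hk
  set n : ℕ := k + 1 with hn
  have hbound : M ≤ m + n * ε := by
    have h1 : (M - m) / ε ≤ k := Nat.le_ceil _
    have h2 : M - m ≤ k * ε := (div_le_iff₀ hε).mp h1
    have : (k : ℝ) * ε ≤ n * ε := by
      have : (k : ℝ) ≤ n := by exact_mod_cast Nat.le_succ k
      nlinarith
    linarith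
  set f : ℕ → C(Z, ℝ) := fun i => (trunc (m + i * ε) (m + (i + 1) * ε)).comp F with hfdef
  set g : ℕ → C(Z, ℝ) := fun i => (trunc (m + i * ε) (m + (i + 1) * ε)).comp G with hgdef
  have hdF : η F = m + ∑ i ∈ Finset.range n, η (f i) :=
    eta_decomp hη F m ε (le_of_lt hε) n (fun z => (hFb z).1)
      (fun z => le_trans (hFb z).2 hbound)
  have hdG : η G = m + ∑ i ∈ Finset.range n, η (g i) :=
    eta_decomp hη G m ε (le_of_lt hε) n (fun z => (hGb z).1)
      (fun z => le_trans (hGb z).2 hbound)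
  -- compare the layers with a shift
  have hcross : ∀ i : ℕ, η (f (i + 1)) ≤ η (g i) := by
    intro i
    have h1 : m + ((i : ℝ) + 1) * ε = (m + i * ε) + ε := by ring
    have h2 : m + (((i : ℕ) + 1 : ℕ) : ℝ) * ε = (m + i * ε) + ε := by push_cast; ring
    have h3 : m + ((((i : ℕ) + 1 : ℕ) : ℝ) + 1) * ε = (m + i * ε) + ε + ε := by push_cast; ring
    have := eta_cross hη F G hFG (m + i * ε) ε (le_of_lt hε)
    simpa only [hfdef, hgdef, h1, h2, h3] using this
  have hf0 : η (f 0) ≤ ε := by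
    have h1 : ∀ z, f 0 z ≤ (ContinuousMap.const Z ε) z := by
      intro z
      simp only [hfdef, ContinuousMap.comp_apply, ContinuousMap.const_apply, Nat.cast_zero]
      calc (trunc (m + 0 * ε) (m + (0 + 1) * ε)) (F z)
          ≤ (m + (0 + 1) * ε) - (m + 0 * ε) := trunc_le _ _ _
        _ = ε := by ring
    have h2 := eta_mono_in hη (⟨_, rfl⟩ : f 0 ∈ qsAlgebra F)
      (const_mem F ε) h1
    rwa [eta_const hη] at h2
  have hgnn : ∀ i, 0 ≤ η (g i) := by
    intro i
    refine hη.nonneg _ fun z => ?_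
    exact trunc_nonneg (by nlinarith) _
  -- assemble
  have hsum : ∑ i ∈ Finset.range n, η (f i)
      ≤ ε + ∑ i ∈ Finset.range n, η (g i) := by
    rw [hn, Finset.sum_range_succ' (fun i => η (f i)) k]
    have h1 : ∑ i ∈ Finset.range k, η (f (i + 1)) ≤ ∑ i ∈ Finset.range k, η (g i) :=
      Finset.sum_le_sum fun i _ => hcross i
    have h2 : ∑ i ∈ Finset.range k, η (g i) ≤ ∑ i ∈ Finset.range (k + 1), η (g i) := by
      rw [Finset.sum_range_succ]
      linarith [hgnn k]
    linarith
  rw [hdF, hdG]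
  linarith
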